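/- For α ∈ (0,1) and every integer n ≥ 1, the sum ∑_{k=1}^{n-1} k^(α-1) (n-k)^(α-1) is at most ∫₀ⁿ x^(α-1)(n-x)^(α-1) dx = n^(2α-1) · Γ(α)²/Γ(2α). -/

import Mathlib

open MeasureTheory intervalIntegral Finset

lemma intInt (α : ℝ) (hα : 0 < α) (n : ℝ) (hn : 0 < n) :
    IntervalIntegrable (fun x : ℝ => x ^ (α - 1) * (n - x) ^ (α - 1)) volume 0 n := by
  have hL : IntervalIntegrable (fun x : ℝ => x ^ (α - 1) * (n - x) ^ (α - 1)) volume 0 (n/2) := by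
    apply IntervalIntegrable.mul_continuousOn
    · exact intervalIntegral.intervalIntegrable_rpow' (by linarith)
    · apply ContinuousOn.rpow_const
      · exact (continuous_const.sub continuous_id).continuousOn
      · intro x hx
        rw [Set.uIcc_of_le (by linarith)] at hx
        left; have := hx.2; intro h; nlinarith [hx.1, hx.2]
  have hR := (hL.comp_sub_left n)
  have : (fun x : ℝ => (fun x : ℝ => x ^ (α - 1) * (n - x) ^ (α - 1)) (n - x))
      = fun x : ℝ => x ^ (α - 1) * (n - x) ^ (α - 1) := by
    funext x; simp only []; rw [sub_sub_cancel, mul_comm]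
  rw [this] at hR
  have h2 : n - n/2 = n/2 := by ring
  have h3 : n - 0 = n := by ring
  rw [h2, h3] at hR
  exact hL.trans hR.symm

lemma intVal (α : ℝ) (hα : 0 < α) (n : ℝ) (hn : 0 < n) :
    ∫ x in (0:ℝ)..n, x ^ (α - 1) * (n - x) ^ (α - 1)
      = n ^ (2 * α - 1) * Real.Gamma α ^ 2 / Real.Gamma (2 * α) := by
  have hC := Complex.betaIntegral_scaled (α : ℂ) (α : ℂ) hn
  have hG := Complex.Gamma_mul_Gamma_eq_betaIntegral
    (s := (α:ℂ)) (t := (α:ℂ)) (by simpa using hα) (by simpa using hα)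
  have hGne : Complex.Gamma ((α:ℂ) + α) ≠ 0 := by
    apply Complex.Gamma_ne_zero
    intro m h
    have : (2*α : ℝ) = -(m:ℝ) := by
      have := congrArg Complex.re h
      simpa [two_mul] using this
    have : (0:ℝ) < 2*α := by linarith
    rw [‹(2*α:ℝ) = -(m:ℝ)›] at this
    have : (0:ℝ) ≤ (m:ℝ) := by positivity
    linarith
  have hbeta : Complex.betaIntegral α α = Complex.Gamma α ^ 2 / Complex.Gamma ((α:ℂ)+α) := by
    rw [eq_div_iff hGne, mul_comm, ← hG, sq]
  -- complex integral equals ofReal of real integral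
  have hcong : (∫ x in (0:ℝ)..n, (x:ℂ) ^ ((α:ℂ) - 1) * ((n:ℂ) - x) ^ ((α:ℂ) - 1))
      = ((∫ x in (0:ℝ)..n, x ^ (α - 1) * (n - x) ^ (α - 1) : ℝ) : ℂ) := by
    rw [← intervalIntegral.integral_ofReal]
    apply intervalIntegral.integral_congr
    intro x hx
    rw [Set.uIcc_of_le hn.le] at hx
    simp only []
    rw [Complex.ofReal_mul, Complex.ofReal_cpow hx.1, Complex.ofReal_cpow (by linarith [hx.2] : (0:ℝ) ≤ n - x)]
    push_cast
    ring
  rw [hcong, hbeta] at hC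
  have h1 : ((n:ℂ)) ^ ((α:ℂ) + α - 1) = ((n ^ (2*α - 1) : ℝ) : ℂ) := by
    rw [Complex.ofReal_cpow hn.le]
    push_cast
    ring_nf
  rw [h1] at hC
  have h2 : Complex.Gamma (α:ℂ) = ((Real.Gamma α : ℝ) : ℂ) := Complex.Gamma_ofReal α
  have h3 : Complex.Gamma ((α:ℂ) + α) = ((Real.Gamma (2*α) : ℝ) : ℂ) := by
    rw [show ((α:ℂ) + α) = ((2*α : ℝ) : ℂ) by push_cast; ring, Complex.Gamma_ofReal]
  rw [h2, h3] at hC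
  have := hC
  rw [show ((n ^ (2*α-1):ℝ):ℂ) * (((Real.Gamma α :ℝ):ℂ)^2 / ((Real.Gamma (2*α):ℝ):ℂ))
      = (((n ^ (2*α-1) * Real.Gamma α ^2 / Real.Gamma (2*α) : ℝ)):ℂ) by push_cast; ring] at this
  exact_mod_cast this

lemma sumBound (α : ℝ) (hα : α ∈ Set.Ioo (0:ℝ) 1) (n : ℕ) (hn : 1 ≤ n) :
    ∑ k ∈ Finset.Ico 1 n, (k : ℝ) ^ (α - 1) * ((n : ℝ) - k) ^ (α - 1)
        ≤ ∫ x in (0:ℝ)..(n:ℝ), x ^ (α - 1) * ((n : ℝ) - x) ^ (α - 1) := by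
  obtain ⟨hα0, hα1⟩ := hα
  set f : ℝ → ℝ := fun x => x ^ (α - 1) * ((n:ℝ) - x) ^ (α - 1) with hf
  have hn0 : (0:ℝ) < n := by exact_mod_cast hn
  have hInt : IntervalIntegrable f volume 0 n := intInt α hα0 n hn0
  have hIntSub : ∀ a b : ℝ, 0 ≤ a → a ≤ b → b ≤ n → IntervalIntegrable f volume a b := by
    intro a b ha hab hb
    refine hInt.mono_set ?_
    rw [Set.uIcc_of_le hn0.le, Set.uIcc_of_le hab]
    intro x hx
    exact ⟨by linarith [hx.1], by linarith [hx.2]⟩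
  have hIOn : ∀ a b : ℝ, 0 ≤ a → a ≤ b → b ≤ n → IntegrableOn f (Set.Ioo a b) volume := by
    intro a b ha hab hb
    have := (hIntSub a b ha hab hb)
    rw [intervalIntegrable_iff_integrableOn_Ioc_of_le hab] at this
    exact this.mono_set Set.Ioo_subset_Ioc_self
  have key : ∀ a b : ℝ, 0 < a * ((n:ℝ) - a) → a * ((n:ℝ)-a) ≤ b * ((n:ℝ)-b) →
      0 ≤ a → a ≤ n → 0 ≤ b → b ≤ n → f b ≤ f a := by
    intro a b hpos hle ha0 han hb0 hbn
    have hfa : f a = (a * ((n:ℝ)-a)) ^ (α-1) := by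
      rw [hf]; simp only []; rw [Real.mul_rpow ha0 (by linarith)]
    have hfb : f b = (b * ((n:ℝ)-b)) ^ (α-1) := by
      rw [hf]; simp only []; rw [Real.mul_rpow hb0 (by linarith)]
    rw [hfa, hfb]
    exact Real.rpow_le_rpow_of_nonpos hpos hle (by linarith)
  set σ : ℕ → ℕ := fun k => if 2*k ≤ n then k-1 else k with hσ
  set F : ℕ → ℝ := fun j => ∫ x in Set.Ioo (j:ℝ) ((j:ℝ)+1), f x with hF
  have hconst : ∀ a : ℝ, ∀ c : ℝ, (∫ _ in Set.Ioo a (a+1), c) = c := by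
    intro a c
    rw [setIntegral_const]
    simp [Real.volume_Ioo]
  have hFle : ∀ k ∈ Finset.Ico 1 n, f k ≤ F (σ k) := by
    intro k hk
    simp only [Finset.mem_Ico] at hk
    obtain ⟨hk1, hkn⟩ := hk
    have hk1' : (1:ℝ) ≤ k := by exact_mod_cast hk1
    have hkn' : (k:ℝ) < n := by exact_mod_cast hkn
    by_cases h2 : 2*k ≤ n
    · have hσk : σ k = k - 1 := if_pos h2
      have hc : ((k-1:ℕ):ℝ) = (k:ℝ) - 1 := by
        push_cast [Nat.cast_sub hk1]; ring
      have h2' : 2*(k:ℝ) ≤ n := by exact_mod_cast h2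
      rw [hσk, hF]
      simp only [hc]
      rw [show (k:ℝ) - 1 + 1 = (k:ℝ) by ring]
      rw [← hconst ((k:ℝ)-1) (f k), show (k:ℝ) - 1 + 1 = (k:ℝ) by ring]
      apply setIntegral_mono_on
      · exact (integrableOn_const_iff).mpr (Or.inr (by simp [Real.volume_Ioo]))
      · exact hIOn _ _ (by linarith) (by linarith) (by linarith)
      · exact measurableSet_Ioo
      · intro x hx
        obtain ⟨hx1, hx2⟩ := hx
        refine key x (k:ℝ) ?_ ?_ ?_ ?_ ?_ ?_
        · have h0x : 0 < x := by linarith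
          have : x < (n:ℝ) := by linarith
          exact mul_pos h0x (by linarith)
        · nlinarith [mul_nonneg (sub_nonneg.mpr hx2.le) (by linarith : (0:ℝ) ≤ (n:ℝ) - k - x)]
        · linarith
        · linarith
        · linarith
        · linarith
    · have hσk : σ k = k := if_neg h2
      have h2' : (n:ℝ) < 2*(k:ℝ) := by exact_mod_cast Nat.lt_of_not_le h2
      have hkn1 : (k:ℝ) + 1 ≤ n := by exact_mod_cast hkn
      rw [hσk, hF]
      simp only []
      rw [← hconst ((k:ℝ)) (f k)]
      apply setIntegral_mono_on
      · exact (integrableOn_const_iff).mpr (Or.inr (by simp [Real.volume_Ioo]))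
      · exact hIOn _ _ (by linarith) (by linarith) (by linarith)
      · exact measurableSet_Ioo
      · intro x hx
        obtain ⟨hx1, hx2⟩ := hx
        refine key x (k:ℝ) ?_ ?_ ?_ ?_ ?_ ?_
        · exact mul_pos (by linarith) (by linarith)
        · nlinarith [mul_nonneg (sub_nonneg.mpr hx1.le) (by linarith : (0:ℝ) ≤ x + k - n)]
        · linarith
        · linarith
        · linarith
        · linarith
  have hFnn : ∀ j ∈ Finset.range n, 0 ≤ F j := by
    intro j hj
    simp only [Finset.mem_range] at hj
    have hjn : (j:ℝ) + 1 ≤ n := by exact_mod_cast hj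
    apply setIntegral_nonneg measurableSet_Ioo
    intro x hx
    have h0 : 0 ≤ x := le_of_lt (lt_of_le_of_lt (Nat.cast_nonneg j) hx.1)
    have h1 : x ≤ n := by linarith [hx.2]
    exact mul_nonneg (Real.rpow_nonneg h0 _) (Real.rpow_nonneg (by linarith) _)
  have hinj : Set.InjOn σ ↑(Finset.Ico 1 n) := by
    intro a ha b hb hab
    simp only [Finset.coe_Ico, Set.mem_Ico] at ha hb
    rw [hσ] at hab
    simp only [] at hab
    split_ifs at hab <;> omega
  have hsub : (Finset.Ico 1 n).image σ ⊆ Finset.range n := by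
    intro j hj
    simp only [Finset.mem_image, Finset.mem_Ico] at hj
    obtain ⟨k, ⟨hk1, hk2⟩, rfl⟩ := hj
    simp only [Finset.mem_range, hσ]
    split_ifs <;> omega
  have hadj : ∑ j ∈ Finset.range n, F j = ∫ x in (0:ℝ)..(n:ℝ), f x := by
    have := intervalIntegral.sum_integral_adjacent_intervals (μ := volume)
      (a := fun i : ℕ => (i:ℝ)) (n := n) (f := f) (fun k hk => by
        refine hIntSub _ _ (Nat.cast_nonneg k) (by push_cast; linarith) ?_
        exact_mod_cast Nat.succ_le_of_lt hk)
    simp only [Nat.cast_zero] at this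
    rw [← this]
    apply Finset.sum_congr rfl
    intro i hi
    rw [hF]
    simp only []
    rw [intervalIntegral.integral_of_le (by push_cast; linarith),
      MeasureTheory.integral_Ioc_eq_integral_Ioo]
    push_cast
    rfl
  calc ∑ k ∈ Finset.Ico 1 n, f (k:ℝ) ≤ ∑ k ∈ Finset.Ico 1 n, F (σ k) :=
        Finset.sum_le_sum hFle
    _ = ∑ j ∈ (Finset.Ico 1 n).image σ, F j := (Finset.sum_image (fun a ha b hb =>
        hinj (by simpa using ha) (by simpa using hb))).symm
    _ ≤ ∑ j ∈ Finset.range n, F j := Finset.sum_le_sum_of_subset_of_nonneg hsub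
        (fun j hj _ => hFnn j hj)
    _ = ∫ x in (0:ℝ)..(n:ℝ), f x := hadj


/-- For `α ∈ (0,1)` and `n ≥ 1`, the convolution sum `∑_{k=1}^{n-1} k^(α-1)(n-k)^(α-1)`
is bounded by `∫₀ⁿ x^(α-1)(n-x)^(α-1) dx`, which equals `n^(2α-1) Γ(α)²/Γ(2α)`. -/
theorem convolution_sum_le_beta (α : ℝ) (hα : α ∈ Set.Ioo (0:ℝ) 1) (n : ℕ) (hn : 1 ≤ n) :
    (∑ k ∈ Finset.Ico 1 n, (k : ℝ) ^ (α - 1) * ((n : ℝ) - k) ^ (α - 1)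
        ≤ ∫ x in (0:ℝ)..(n:ℝ), x ^ (α - 1) * ((n : ℝ) - x) ^ (α - 1)) ∧
    (∫ x in (0:ℝ)..(n:ℝ), x ^ (α - 1) * ((n : ℝ) - x) ^ (α - 1)
        = (n : ℝ) ^ (2 * α - 1) * Real.Gamma α ^ 2 / Real.Gamma (2 * α)) := by
  exact ⟨sumBound α hα n hn, intVal α hα.1 (n:ℝ) (by exact_mod_cast hn)⟩
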